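/- Let d ≥ 3 and let u > v ≥ 1 be integers, and let P = {(i_1,…,i_d) ∈ ℤ^d : 0 ≤ i_j ≤ u−1 for 1 ≤ j ≤ d−1, and 0 ≤ i_d ≤ duv−1}. Then: (a) every (d−2)-flat in ℝ^d that is not parallel to the x_d-axis contains at most u^{d−2} points of P, and (b) every (d−2)-flat parallel to the x_d-axis contains at most u^{d−3}·duv = d·v·u^{d−2} points of P. In particular, every (d−2)-flat contains at most d·v·u^{d−2} points of P. -/

import Mathlib

open Module Submodule Set

lemma aux_exists_coords (d m : ℕ) (V : Submodule ℝ (EuclideanSpace ℝ (Fin d)))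
    (hV : Module.finrank ℝ V = m) (J : Set (Fin d))
    (hJ : ∀ v ∈ V, (∀ i ∈ J, v i = 0) → v = 0) :
    ∃ I : Finset (Fin d), ↑I ⊆ J ∧ I.card ≤ m ∧
      ∀ v ∈ V, (∀ i ∈ I, v i = 0) → v = 0 := by
  classical
  set e : Fin d → EuclideanSpace ℝ (Fin d) := fun i => EuclideanSpace.single i 1 with he
  have hecoe : ⇑(EuclideanSpace.basisFun (Fin d) ℝ).toBasis = e := by
    funext i
    rw [OrthonormalBasis.coe_toBasis, EuclideanSpace.basisFun_apply]
  have he_span : Submodule.span ℝ (Set.range e) = ⊤ := by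
    rw [← hecoe]; exact (EuclideanSpace.basisFun (Fin d) ℝ).toBasis.span_eq
  have he_indep : LinearIndependent ℝ e := by
    rw [← hecoe]; exact (EuclideanSpace.basisFun (Fin d) ℝ).toBasis.linearIndependent
  have he_ne : ∀ i, e i ≠ 0 := by
    intro i h
    have := congrArg (fun x => x i) h
    simp [he, EuclideanSpace.single_apply, PiLp.zero_apply] at this
  have he_vanish : ∀ i, i ∉ J → ∀ j, j ∈ J → e i j = 0 := by
    intro i hi j hj
    simp only [he, EuclideanSpace.single_apply, ite_eq_right_iff]
    intro h; exact absurd (h ▸ hj) hi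
  have he_mem_J : ∀ i, i ∉ J → e i ∉ V := by
    intro i hi hmem
    exact he_ne i (hJ _ hmem (he_vanish i hi))
  obtain ⟨s, hsV, hs_span, hs_indep⟩ :=
    exists_linearIndependent ℝ (V : Set (EuclideanSpace ℝ (Fin d)))
  rw [Submodule.span_coe_eq_restrictScalars] at hs_span
  have hs_span' : Submodule.span ℝ s = V := hs_span
  set K : Submodule ℝ (EuclideanSpace ℝ (Fin d)) :=
    { carrier := {x | ∀ i ∈ J, x i = 0}
      zero_mem' := by intro i _; rfl
      add_mem' := by
        intro a b ha hb i hi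
        rw [PiLp.add_apply, ha i hi, hb i hi, add_zero]
      smul_mem' := by
        intro c a ha i hi
        rw [PiLp.smul_apply, ha i hi, smul_zero] } with hK
  have hVK : Disjoint V K := by
    rw [Submodule.disjoint_def]
    exact fun x hxV hxK => hJ x hxV hxK
  have hspanK : Submodule.span ℝ (e '' Jᶜ) ≤ K := by
    rw [Submodule.span_le]
    rintro x ⟨i, hi, rfl⟩
    exact he_vanish i hi
  have hs'_indep : LinearIndepOn ℝ id (s ∪ e '' Jᶜ) := by
    refine LinearIndepOn.id_union hs_indep ?_ ?_
    · exact (he_indep.linearIndepOn_id).mono (Set.image_subset_range e Jᶜ)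
    · rw [hs_span']
      exact hVK.mono_right hspanK
  have hst : s ∪ e '' Jᶜ ⊆ (s ∪ e '' Jᶜ) ∪ Set.range e := Set.subset_union_left
  set b : Set (EuclideanSpace ℝ (Fin d)) := hs'_indep.extend hst with hb
  have hb_sub : b ⊆ (s ∪ e '' Jᶜ) ∪ Set.range e := hs'_indep.extend_subset hst
  have hb_sup : s ∪ e '' Jᶜ ⊆ b := hs'_indep.subset_extend hst
  have hsb_sub : s ⊆ b := (Set.subset_union_left).trans hb_sup
  have hb_indep : LinearIndependent ℝ ((↑) : b → EuclideanSpace ℝ (Fin d)) :=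
    hs'_indep.linearIndepOn_extend hst
  have hb_span : Submodule.span ℝ b = ⊤ := by
    rw [hs'_indep.span_extend_eq_span hst, eq_top_iff, ← he_span]
    exact Submodule.span_mono Set.subset_union_right
  set Efin : Finset (Fin d) := Finset.univ.filter (fun i => e i ∈ b \ s) with hEfin
  set I : Finset (Fin d) := Finset.univ.filter (fun i => e i ∉ b \ s) with hI
  have hIJ : ↑I ⊆ J := by
    intro i hi
    by_contra hiJ
    have h1 : e i ∈ b := hb_sup (Set.mem_union_right _ ⟨i, hiJ, rfl⟩)
    have h2 : e i ∉ s := fun h => he_mem_J i hiJ (hsV h)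
    have : e i ∈ b \ s := ⟨h1, h2⟩
    simp only [hI, Finset.mem_coe, Finset.mem_filter] at hi
    exact hi.2 this
  set W : Submodule ℝ (EuclideanSpace ℝ (Fin d)) := Submodule.span ℝ (e '' ↑Efin) with hW
  have hb_cover : b ⊆ s ∪ e '' ↑Efin := by
    intro x hx
    by_cases hxs : x ∈ s
    · exact Set.mem_union_left _ hxs
    · have hxr : x ∈ Set.range e := by
        rcases hb_sub hx with h | h
        · rcases h with h | h
          · exact absurd h hxs
          · exact Set.image_subset_range e Jᶜ h
        · exact h
      rcases hxr with ⟨i, rfl⟩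
      refine Set.mem_union_right _ ⟨i, ?_, rfl⟩
      simp only [hEfin, Finset.coe_filter, Set.mem_setOf_eq, Finset.mem_univ, true_and]
      exact ⟨hx, hxs⟩
  have hVW_top : V ⊔ W = ⊤ := by
    rw [eq_top_iff, ← hb_span]
    calc Submodule.span ℝ b ≤ Submodule.span ℝ (s ∪ e '' ↑Efin) := Submodule.span_mono hb_cover
    _ = Submodule.span ℝ s ⊔ Submodule.span ℝ (e '' ↑Efin) := Submodule.span_union _ _
    _ = V ⊔ W := by rw [hs_span']
  have hW_card : Module.finrank ℝ W ≤ Efin.card := by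
    have h1 : e '' ↑Efin = ↑(Efin.image e) := by simp [Finset.coe_image]
    rw [hW, h1]
    exact (finrank_span_finset_le_card (Efin.image e)).trans (Finset.card_image_le)
  have hcard : I.card ≤ m := by
    have h1 : Module.finrank ℝ (⊤ : Submodule ℝ (EuclideanSpace ℝ (Fin d)))
        = d := by rw [finrank_top]; exact finrank_euclideanSpace_fin
    have h2 := Submodule.finrank_sup_add_finrank_inf_eq V W
    rw [hVW_top, h1, hV] at h2
    have h3 : Efin.card + I.card = d := by
      have h4 := Finset.card_filter_add_card_filter_not
        (s := (Finset.univ : Finset (Fin d))) (p := fun i => e i ∈ b \ s)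
      rw [Finset.card_univ, Fintype.card_fin] at h4
      rw [hEfin, hI]
      convert h4 using 3
    omega
  refine ⟨I, hIJ, hcard, ?_⟩
  intro x hxV hxI
  have hEbs : e '' ↑Efin ⊆ b \ s := by
    rintro y ⟨i, hi, rfl⟩
    simp only [hEfin, Finset.coe_filter, Set.mem_setOf_eq, Finset.mem_univ, true_and] at hi
    exact hi
  have hxW : x ∈ W := by
    have hrepr := (EuclideanSpace.basisFun (Fin d) ℝ).toBasis.sum_repr x
    have hx_sum : ∑ i : Fin d, x i • e i = x := by
      refine Eq.trans (Finset.sum_congr rfl (fun i _ => ?_)) hrepr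
      rw [OrthonormalBasis.coe_toBasis_repr_apply, EuclideanSpace.basisFun_repr, hecoe]
    rw [← hx_sum]
    refine Submodule.sum_mem _ (fun i _ => ?_)
    by_cases hiI : i ∈ I
    · rw [hxI i hiI, zero_smul]; exact Submodule.zero_mem _
    · have hiE : e i ∈ b \ s := by
        simp only [hI, Finset.mem_filter, Finset.mem_univ, true_and, not_not] at hiI
        exact hiI
      refine Submodule.smul_mem _ _ (Submodule.subset_span ⟨i, ?_, rfl⟩)
      simp only [hEfin, Finset.coe_filter, Set.mem_setOf_eq, Finset.mem_univ, true_and]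
      exact hiE
  have hsb : Disjoint (Submodule.span ℝ s) (Submodule.span ℝ (b \ s)) := by
    have h := hb_indep.disjoint_span_image (R := ℝ)
      (s := ((↑) : b → _) ⁻¹' s) (t := ((↑) : b → _) ⁻¹' (b \ s))
      (Set.disjoint_sdiff_right.preimage _)
    rwa [Subtype.image_preimage_coe, Subtype.image_preimage_coe,
      Set.inter_eq_right.mpr hsb_sub, Set.inter_eq_right.mpr Set.diff_subset] at h
  have h1 : x ∈ Submodule.span ℝ s := by rw [hs_span']; exact hxV
  have h2 : x ∈ Submodule.span ℝ (b \ s) := Submodule.span_mono hEbs hxW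
  exact Submodule.disjoint_def.mp hsb x h1 h2

lemma aux_count (d : ℕ) (f : AffineSubspace ℝ (EuclideanSpace ℝ (Fin d)))
    (P : Set (EuclideanSpace ℝ (Fin d))) (bnd : Fin d → ℕ)
    (hPb : ∀ x ∈ P, ∀ i : Fin d, ∃ m : ℕ, x i = (m : ℝ) ∧ m < bnd i)
    (I : Finset (Fin d))
    (hinj : ∀ v ∈ f.direction, (∀ i ∈ I, v i = 0) → v = 0) :
    (P ∩ (f : Set (EuclideanSpace ℝ (Fin d)))).ncard ≤ ∏ i ∈ I, bnd i := by
  classical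
  set b' : Fin d → ℕ := fun i => if i ∈ I then bnd i else 1 with hb'
  set ψ : EuclideanSpace ℝ (Fin d) → (Fin d → ℕ) := fun x i =>
    if h : i ∈ I ∧ ∃ m : ℕ, x i = (m : ℝ) ∧ m < bnd i then h.2.choose else 0 with hψ
  have hmaps : ∀ x ∈ P ∩ (f : Set (EuclideanSpace ℝ (Fin d))),
      ψ x ∈ (↑(Fintype.piFinset (fun i => Finset.range (b' i))) : Set (Fin d → ℕ)) := by
    intro x hx
    rw [Finset.mem_coe, Fintype.mem_piFinset]
    intro i
    rw [Finset.mem_range]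
    by_cases hiI : i ∈ I
    · have hex := hPb x hx.1 i
      rw [hψ]
      simp only [dif_pos (And.intro hiI hex), hb', if_pos hiI]
      exact hex.choose_spec.2
    · rw [hψ]
      have hneg : ¬(i ∈ I ∧ ∃ m : ℕ, x i = (m : ℝ) ∧ m < bnd i) := fun h => hiI h.1
      simp only [dif_neg hneg, hb', if_neg hiI]
      exact Nat.zero_lt_one
  have hinjOn : Set.InjOn ψ (P ∩ (f : Set (EuclideanSpace ℝ (Fin d)))) := by
    intro x hx y hy hxy
    have hcoord : ∀ i ∈ I, x i = y i := by
      intro i hi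
      have hex := hPb x hx.1 i
      have hey := hPb y hy.1 i
      have hψeq : ψ x i = ψ y i := congrFun hxy i
      rw [hψ] at hψeq
      simp only [dif_pos (And.intro hi hex), dif_pos (And.intro hi hey)] at hψeq
      rw [hex.choose_spec.1, hey.choose_spec.1, hψeq]
    have hv : x - y ∈ f.direction := by
      have := AffineSubspace.vsub_mem_direction hx.2 hy.2
      rwa [vsub_eq_sub] at this
    have := hinj _ hv (fun i hi => by rw [PiLp.sub_apply, hcoord i hi, sub_self])
    exact sub_eq_zero.mp this
  have hcount := Set.ncard_le_ncard_of_injOn ψ hmaps hinjOn (Finset.finite_toSet _)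
  rw [Set.ncard_coe_finset, Fintype.card_piFinset] at hcount
  refine hcount.trans (le_of_eq ?_)
  have h1 : ∀ i : Fin d, (Finset.range (b' i)).card = b' i := fun i => Finset.card_range _
  calc ∏ i : Fin d, (Finset.range (b' i)).card = ∏ i : Fin d, b' i :=
        Finset.prod_congr rfl (fun i _ => h1 i)
    _ = ∏ i ∈ Finset.univ ∩ I, bnd i := Finset.prod_ite_mem _ _ _
    _ = ∏ i ∈ I, bnd i := by rw [Finset.univ_inter]

/-- **First upper bound construction (flat bound).** For `d ≥ 3` and integers `u > v ≥ 1`,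
let `P` be the `u × ⋯ × u × duv` integer grid in `ℝ^d`. Then (a) every `(d-2)`-flat not
parallel to the `x_d`-axis contains at most `u^{d-2}` points of `P`; (b) every `(d-2)`-flat
parallel to the `x_d`-axis contains at most `u^{d-3}·duv = d·v·u^{d-2}` points of `P`;
in particular every `(d-2)`-flat contains at most `d·v·u^{d-2}` points of `P`.
(A flat is parallel to the `x_d`-axis if its direction contains the basis vector `e_d`.) -/
theorem stmt_11 (d u v : ℕ) (hd : 3 ≤ d) (hvu : v < u) (hv : 1 ≤ v)
    (P : Set (EuclideanSpace ℝ (Fin d)))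
    (hP : P = {x : EuclideanSpace ℝ (Fin d) | ∀ j : Fin d, ∃ m : ℕ,
      x j = (m : ℝ) ∧ (if (j : ℕ) < d - 1 then m ≤ u - 1 else m ≤ d * u * v - 1)}) :
    (∀ f : AffineSubspace ℝ (EuclideanSpace ℝ (Fin d)),
      Module.finrank ℝ f.direction = d - 2 →
      EuclideanSpace.single (⟨d - 1, by omega⟩ : Fin d) (1 : ℝ) ∉ f.direction →
      (P ∩ (f : Set (EuclideanSpace ℝ (Fin d)))).ncard ≤ u ^ (d - 2)) ∧
    (∀ f : AffineSubspace ℝ (EuclideanSpace ℝ (Fin d)),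
      Module.finrank ℝ f.direction = d - 2 →
      EuclideanSpace.single (⟨d - 1, by omega⟩ : Fin d) (1 : ℝ) ∈ f.direction →
      (P ∩ (f : Set (EuclideanSpace ℝ (Fin d)))).ncard ≤ u ^ (d - 3) * (d * u * v)) ∧
    (∀ f : AffineSubspace ℝ (EuclideanSpace ℝ (Fin d)),
      Module.finrank ℝ f.direction = d - 2 →
      (P ∩ (f : Set (EuclideanSpace ℝ (Fin d)))).ncard ≤ d * v * u ^ (d - 2)) := by
  classical
  have hu : 1 ≤ u := by omega
  have hduv : 1 ≤ d * u * v := by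
    have : 0 < d * u * v := Nat.mul_pos (Nat.mul_pos (by omega) (by omega)) (by omega)
    omega
  have hudle : u ≤ d * u * v := by
    calc u = 1 * u * 1 := by ring
      _ ≤ d * u * v := by gcongr <;> omega
  set lastc : Fin d := ⟨d - 1, by omega⟩ with hlastc
  set bnd : Fin d → ℕ := fun i => if (i : ℕ) < d - 1 then u else d * u * v with hbnd
  have hPb : ∀ x ∈ P, ∀ i : Fin d, ∃ m : ℕ, x i = (m : ℝ) ∧ m < bnd i := by
    intro x hx i
    rw [hP] at hx
    obtain ⟨m, h1, h2⟩ := hx i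
    refine ⟨m, h1, ?_⟩
    have hbi : bnd i = if (i : ℕ) < d - 1 then u else d * u * v := rfl
    rw [hbi]
    split at h2 <;> split <;> omega
  have hbnd_ne : ∀ i : Fin d, i ≠ lastc → bnd i = u := by
    intro i hi
    rw [hbnd]
    refine if_pos ?_
    have h1 : (i : ℕ) < d := i.isLt
    have h2 : (i : ℕ) ≠ d - 1 := fun h => hi (Fin.ext h)
    omega
  have hbnd_last : bnd lastc = d * u * v := by
    rw [hbnd, hlastc]
    exact if_neg (by simp)
  -- Part (a)
  have parta : ∀ f : AffineSubspace ℝ (EuclideanSpace ℝ (Fin d)),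
      Module.finrank ℝ f.direction = d - 2 →
      EuclideanSpace.single lastc (1 : ℝ) ∉ f.direction →
      (P ∩ (f : Set (EuclideanSpace ℝ (Fin d)))).ncard ≤ u ^ (d - 2) := by
    intro f hdim hnot
    have hJ : ∀ w ∈ f.direction,
        (∀ i ∈ ({i : Fin d | i ≠ lastc} : Set (Fin d)), w i = 0) → w = 0 := by
      intro w hw hcoords
      by_contra hne
      have hlast : w lastc ≠ 0 := by
        intro h0
        refine hne ?_
        ext i
        rw [PiLp.zero_apply]
        by_cases hi : i = lastc
        · rw [hi]; exact h0
        · exact hcoords i hi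
      have hkey : EuclideanSpace.single lastc (1 : ℝ) = (w lastc)⁻¹ • w := by
        ext j
        rw [PiLp.smul_apply, EuclideanSpace.single_apply]
        by_cases hj : j = lastc
        · rw [if_pos hj, hj, smul_eq_mul, inv_mul_cancel₀ hlast]
        · rw [if_neg hj, hcoords j hj, smul_zero]
      exact hnot (hkey ▸ Submodule.smul_mem _ _ hw)
    obtain ⟨I, hIJ, hIcard, hIinj⟩ := aux_exists_coords d (d - 2) f.direction hdim _ hJ
    refine (aux_count d f P bnd hPb I hIinj).trans ?_
    have hprod : ∏ i ∈ I, bnd i = u ^ I.card := by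
      rw [Finset.prod_congr rfl (fun i hi => hbnd_ne i (hIJ hi)), Finset.prod_const]
    rw [hprod]
    exact Nat.pow_le_pow_right hu hIcard
  -- Part (b)
  have partb : ∀ f : AffineSubspace ℝ (EuclideanSpace ℝ (Fin d)),
      Module.finrank ℝ f.direction = d - 2 →
      (P ∩ (f : Set (EuclideanSpace ℝ (Fin d)))).ncard ≤ u ^ (d - 3) * (d * u * v) := by
    intro f hdim
    have hJ : ∀ w ∈ f.direction,
        (∀ i ∈ (Set.univ : Set (Fin d)), w i = 0) → w = 0 := by
      intro w _ hcoords
      ext i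
      rw [PiLp.zero_apply]
      exact hcoords i (Set.mem_univ i)
    obtain ⟨I, hIJ, hIcard, hIinj⟩ := aux_exists_coords d (d - 2) f.direction hdim _ hJ
    refine (aux_count d f P bnd hPb I hIinj).trans ?_
    by_cases hlast : lastc ∈ I
    · have hsplit : bnd lastc * ∏ i ∈ I.erase lastc, bnd i = ∏ i ∈ I, bnd i :=
        Finset.mul_prod_erase I bnd hlast
      have hprod : ∏ i ∈ I.erase lastc, bnd i = u ^ (I.erase lastc).card := by
        rw [Finset.prod_congr rfl (fun i hi => hbnd_ne i (Finset.ne_of_mem_erase hi)),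
          Finset.prod_const]
      have hcard2 : (I.erase lastc).card ≤ d - 3 := by
        rw [Finset.card_erase_of_mem hlast]
        omega
      calc ∏ i ∈ I, bnd i = (d * u * v) * u ^ (I.erase lastc).card := by
            rw [← hsplit, hbnd_last, hprod]
        _ ≤ (d * u * v) * u ^ (d - 3) := by gcongr
        _ = u ^ (d - 3) * (d * u * v) := mul_comm _ _
    · have hprod : ∏ i ∈ I, bnd i = u ^ I.card := by
        rw [Finset.prod_congr rfl (fun i hi => hbnd_ne i (fun h => hlast (h ▸ hi))),
          Finset.prod_const]
      have h32 : d - 2 = (d - 3) + 1 := by omega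
      calc ∏ i ∈ I, bnd i = u ^ I.card := hprod
        _ ≤ u ^ (d - 2) := Nat.pow_le_pow_right hu hIcard
        _ = u ^ (d - 3) * u := by rw [h32, pow_succ]
        _ ≤ u ^ (d - 3) * (d * u * v) := by gcongr
  refine ⟨parta, fun f hdim _ => partb f hdim, ?_⟩
  intro f hdim
  have hkey : u ^ (d - 3) * (d * u * v) = d * v * u ^ (d - 2) := by
    have h32 : d - 2 = (d - 3) + 1 := by omega
    rw [h32, pow_succ]; ring
  by_cases hmem : EuclideanSpace.single lastc (1 : ℝ) ∈ f.direction
  · exact (partb f hdim).trans (le_of_eq hkey)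
  · refine (parta f hdim hmem).trans ?_
    have : 0 < d * v := Nat.mul_pos (by omega) (by omega)
    exact Nat.le_mul_of_pos_left _ this
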